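/- Let M and N be finite matroids on ground sets E(M) and E(N) respectively, and let τ : E(M) → E(N) be a weak map, i.e., a function such that rk_N(τ(X)) ≤ rk_M(X) for every subset X ⊆ E(M). If τ is surjective onto E(N), then the induced map τ̄ from the flats of M to the flats of N given by τ̄(F) = cl_N(τ(F)) (the closure in N of the image of F) is a monotone map (with respect to inclusion of flats) that is surjective onto the set of flats of N. -/

import Mathlib

/-- The rank of a set `X` in a matroid `M`: the supremum of the cardinalities of
independent subsets of `X`. -/
noncomputable def matroidRk {α : Type*} (M : Matroid α) (X : Set α) : ℕ :=
  sSup (Set.ncard '' {I : Set α | M.Indep I ∧ I ⊆ X})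

section aux

variable {α : Type*} {M : Matroid α} {I X A : Set α} {x : α}

lemma matroidRk_bddAbove [M.Finite] (X : Set α) :
    BddAbove (Set.ncard '' {I : Set α | M.Indep I ∧ I ⊆ X}) := by
  refine ⟨M.E.ncard, ?_⟩
  rintro n ⟨J, ⟨hJ, -⟩, rfl⟩
  exact Set.ncard_le_ncard hJ.subset_ground M.ground_finite

lemma ncard_le_matroidRk [M.Finite] (hI : M.Indep I) (hIX : I ⊆ X) :
    I.ncard ≤ matroidRk M X :=
  le_csSup (matroidRk_bddAbove X) ⟨I, ⟨hI, hIX⟩, rfl⟩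

lemma matroidRk_le [M.Finite] {n : ℕ} (h : ∀ J, M.Indep J → J ⊆ X → J.ncard ≤ n) :
    matroidRk M X ≤ n := by
  refine csSup_le ⟨0, ∅, ⟨M.empty_indep, Set.empty_subset _⟩, by simp⟩ ?_
  rintro m ⟨J, ⟨hJ, hJX⟩, rfl⟩
  exact h J hJ hJX

lemma matroidRk_basis [M.Finite] (hIX : M.IsBasis I X) : matroidRk M X = I.ncard := by
  refine le_antisymm (matroidRk_le fun J hJ hJX => ?_)
    (ncard_le_matroidRk hIX.indep hIX.subset)
  obtain ⟨J', hJ', hJJ'⟩ := hJ.subset_isBasis_of_subset hJX hIX.subset_ground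
  have hcard : J'.encard = I.encard := hJ'.encard_eq_encard hIX
  calc J.ncard ≤ J'.ncard :=
        Set.ncard_le_ncard hJJ' (M.ground_finite.subset hJ'.indep.subset_ground)
    _ = I.ncard := by rw [Set.ncard, Set.ncard, hcard]

lemma matroidRk_le_ncard [M.Finite] (X : Set α) (hXfin : X.Finite) :
    matroidRk M X ≤ X.ncard :=
  matroidRk_le fun J _ hJX => Set.ncard_le_ncard hJX hXfin

lemma flat_closure (M : Matroid α) (X : Set α) : M.IsFlat (M.closure X) := by
  rw [Matroid.closure_def, Set.sInter_eq_iInter]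
  haveI : Nonempty ↑{F | M.IsFlat F ∧ X ∩ M.E ⊆ F} :=
    ⟨⟨M.E, M.ground_isFlat, Set.inter_subset_right⟩⟩
  exact Matroid.IsFlat.iInter fun F => F.2.1

lemma matroidRk_insert_of_mem_closure [M.Finite] (hA : A ⊆ M.E) (hx : x ∈ M.closure A) :
    matroidRk M (insert x A) = matroidRk M A := by
  obtain ⟨I, hI⟩ := M.exists_isBasis A hA
  have hI2 : M.IsBasis I (insert x A) := by
    refine hI.indep.isBasis_of_subset_of_subset_closure (hI.subset.trans (Set.subset_insert _ _)) ?_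
    rw [hI.closure_eq_closure]
    exact Set.insert_subset hx (M.subset_closure A hA)
  rw [matroidRk_basis hI2, matroidRk_basis hI]

lemma mem_closure_of_matroidRk_le [M.Finite] {b : α} (hI : M.Indep I) (hb : b ∈ M.E)
    (h : matroidRk M (insert b I) ≤ I.ncard) : b ∈ M.closure I := by
  rw [hI.mem_closure_iff']
  refine ⟨hb, fun hind => ?_⟩
  by_contra hbI
  have h1 : (insert b I).ncard ≤ matroidRk M (insert b I) :=
    ncard_le_matroidRk hind Set.Subset.rfl
  rw [Set.ncard_insert_of_notMem hbI (M.ground_finite.subset hI.subset_ground)] at h1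
  omega

end aux

/-- If `τ` is a weak map between finite matroids `M` and `N` that is surjective onto the
ground set of `N`, then `F ↦ cl_N(τ(F))` is a monotone map from flats of `M` to flats of `N`
that is surjective onto the flats of `N`. -/
theorem engstrom_surjective_poset_map {α β : Type*} (M : Matroid α) (N : Matroid β)
    [M.Finite] [N.Finite] (τ : α → β)
    (hmap : Set.MapsTo τ M.E N.E)
    (hweak : ∀ X ⊆ M.E, matroidRk N (τ '' X) ≤ matroidRk M X)
    (hsurj : τ '' M.E = N.E) :
    (∀ F, M.IsFlat F → N.IsFlat (N.closure (τ '' F))) ∧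
    (∀ F₁ F₂, M.IsFlat F₁ → M.IsFlat F₂ → F₁ ⊆ F₂ →
      N.closure (τ '' F₁) ⊆ N.closure (τ '' F₂)) ∧
    (∀ G, N.IsFlat G → ∃ F, M.IsFlat F ∧ N.closure (τ '' F) = G) := by
  refine ⟨fun F _ => flat_closure N _, fun F₁ F₂ _ _ h =>
    N.closure_subset_closure (Set.image_mono h), fun G hG => ?_⟩
  obtain ⟨I, hI⟩ := N.exists_isBasis G hG.subset_ground
  have hclI : N.closure I = G := by rw [hI.closure_eq_closure, hG.closure]
  -- choose preimages of a basis `I` of `G`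
  have hpre : ∀ i : I, ∃ x ∈ M.E, τ x = (i : β) := by
    rintro ⟨i, hi⟩
    have : i ∈ τ '' M.E := by rw [hsurj]; exact hI.indep.subset_ground hi
    obtain ⟨x, hx, rfl⟩ := this
    exact ⟨x, hx, rfl⟩
  choose f hfE hfτ using hpre
  set A : Set α := Set.range f with hA
  have hAE : A ⊆ M.E := by rintro x ⟨i, rfl⟩; exact hfE i
  have hτA : τ '' A = I := by
    rw [hA, ← Set.range_comp]
    have : (fun i : I => τ (f i)) = fun i : I => (i : β) := funext fun i => hfτ i
    rw [Function.comp_def, this, Subtype.range_coe]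
  have hinj : Set.InjOn τ A := by
    rintro x ⟨i, rfl⟩ y ⟨j, rfl⟩ hxy
    rw [hfτ i, hfτ j] at hxy
    rw [Subtype.ext hxy]
  have hAfin : A.Finite := M.ground_finite.subset hAE
  have hAcard : A.ncard = I.ncard := by rw [← hτA, Set.ncard_image_of_injOn hinj]
  have hrkA : matroidRk M A ≤ I.ncard := hAcard ▸ matroidRk_le_ncard A hAfin
  refine ⟨M.closure A, flat_closure M A, ?_⟩
  -- every element of the image of the closure lies in `G`
  have himsub : τ '' M.closure A ⊆ G := by
    rintro y ⟨x, hxF, rfl⟩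
    have hxE : x ∈ M.E := Matroid.mem_ground_of_mem_closure hxF
    have hkey : matroidRk N (insert (τ x) I) ≤ I.ncard := by
      have h1 : matroidRk N (τ '' insert x A) ≤ matroidRk M (insert x A) :=
        hweak _ (Set.insert_subset hxE hAE)
      rw [matroidRk_insert_of_mem_closure hAE hxF] at h1
      rw [Set.image_insert_eq, hτA] at h1
      exact h1.trans hrkA
    rw [← hclI]
    exact mem_closure_of_matroidRk_le hI.indep (hmap hxE) hkey
  refine le_antisymm ?_ ?_
  · rw [← hG.closure]
    exact N.closure_subset_closure himsub
  · rw [← hclI]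
    refine N.closure_subset_closure ?_
    rw [← hτA]
    exact Set.image_mono (M.subset_closure A hAE)
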